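/- (Hersch–Szegő normalization, continuous dependence.) Let Ω ⊂ ℂ be a bounded open set, let f : Ω → ℝ be integrable with f ≥ 0 and ∫_Ω f dA > 0, and let g : [0,1] → ℝ be continuous and strictly increasing with g(0) = 0. Define v(z) = g(|z|)·z/|z| for z ≠ 0, v(0) = 0. Let P be a metric space and T : P × Ω → 𝔻 be jointly continuous. For each q ∈ P let w(q) ∈ 𝔻 denote the unique point with ∫_Ω v(M_{w(q)}(T(q,z))) f(z) dA(z) = 0. Then the map q ↦ w(q) is continuous from P to 𝔻. -/

import Mathlib

open Complex Metric Set MeasureTheory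

/-- The Möbius map `M_w(z) = (z + w)/(z·conj(w) + 1)`. -/
noncomputable def Mob (w z : ℂ) : ℂ := (z + w) / (z * (starRingEnd ℂ) w + 1)

open Classical in
/-- The function `v(z) = g(|z|)·z/|z|` for `z ≠ 0`, with `v(0) = 0`. -/
noncomputable def vfun (g : ℝ → ℝ) (z : ℂ) : ℂ :=
  if z = 0 then 0 else (g ‖z‖ : ℂ) * z / (‖z‖ : ℂ)

open Filter

lemma vfun_norm_le_abs (g : ℝ → ℝ) (z : ℂ) : ‖vfun g z‖ ≤ |g (‖z‖)| := by
  unfold vfun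
  split
  · next h => simp [h]
  · next h =>
    have ha : ‖z‖ ≠ 0 := by simpa using h
    have h0 : (0:ℝ) ≤ ‖z‖ := norm_nonneg z
    rw [norm_div, norm_mul, Complex.norm_real, Complex.norm_real, norm_norm, Real.norm_eq_abs,
      mul_div_assoc, div_self ha, mul_one]

lemma vfun_norm_le {g : ℝ → ℝ} (hgm : StrictMonoOn g (Set.Icc 0 1)) (hg0 : g 0 = 0)
    {z : ℂ} (hz : ‖z‖ ≤ 1) : ‖vfun g z‖ ≤ g 1 := by
  have hmono := hgm.monotoneOn
  have h0 : (0:ℝ) ≤ ‖z‖ := norm_nonneg z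
  have hmem : ‖z‖ ∈ Set.Icc (0:ℝ) 1 := ⟨h0, hz⟩
  have h1 : g (‖z‖) ≤ g 1 := hmono hmem ⟨zero_le_one, le_refl 1⟩ hz
  have h2 : 0 ≤ g (‖z‖) := hg0 ▸ hmono ⟨le_refl 0, zero_le_one⟩ hmem h0
  exact (vfun_norm_le_abs g z).trans (by rw [_root_.abs_of_nonneg h2]; exact h1)

lemma vfun_contOn {g : ℝ → ℝ} (hgc : ContinuousOn g (Set.Icc 0 1)) (hg0 : g 0 = 0) :
    ContinuousOn (vfun g) (closedBall (0:ℂ) 1) := by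
  intro z hz
  have hmaps : MapsTo (fun y : ℂ => ‖y‖) (closedBall (0:ℂ) 1) (Set.Icc (0:ℝ) 1) :=
    fun y hy => ⟨norm_nonneg y, by simpa using mem_closedBall_zero_iff.1 hy⟩
  have habs : ContinuousWithinAt (fun y : ℂ => ‖y‖) (closedBall (0:ℂ) 1) z :=
    continuous_norm.continuousWithinAt
  have hgabs : ContinuousWithinAt (fun y : ℂ => g (‖y‖)) (closedBall (0:ℂ) 1) z :=
    (hgc _ (hmaps hz)).comp habs hmaps
  rcases eq_or_ne z 0 with rfl | hz0
  · have hv0 : vfun g 0 = 0 := by simp [vfun]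
    rw [ContinuousWithinAt, hv0]
    apply squeeze_zero_norm (vfun_norm_le_abs g)
    have : Tendsto (fun y : ℂ => g (‖y‖)) (nhdsWithin 0 (closedBall (0:ℂ) 1)) (nhds 0) := by
      simpa [hg0] using hgabs.tendsto
    simpa using this.abs
  · have hev : ∀ᶠ y in nhdsWithin z (closedBall (0:ℂ) 1), vfun g y
        = (g (‖y‖) : ℂ) * y / (‖y‖ : ℂ) := by
      filter_upwards [eventually_nhdsWithin_of_eventually_nhds
        (eventually_ne_nhds hz0)] with y hy
      simp [vfun, hy]
    have heq : vfun g z = (g (‖z‖) : ℂ) * z / (‖z‖ : ℂ) := by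
      simp [vfun, hz0]
    have hc : ContinuousWithinAt
        (fun y : ℂ => (g (‖y‖) : ℂ) * y / (‖y‖ : ℂ))
        (closedBall (0:ℂ) 1) z := by
      apply ContinuousWithinAt.div
      · exact (Complex.continuous_ofReal.continuousAt.comp_continuousWithinAt hgabs).mul
          continuousWithinAt_id
      · exact Complex.continuous_ofReal.continuousAt.comp_continuousWithinAt habs
      · simpa using hz0
    exact (hc.congr_of_eventuallyEq hev heq : ContinuousWithinAt (vfun g) _ z)

lemma mob_denom_ne {w z : ℂ} (hw : ‖w‖ ≤ 1) (hz : ‖z‖ < 1) :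
    z * (starRingEnd ℂ) w + 1 ≠ 0 := by
  intro h
  have h1 : z * (starRingEnd ℂ) w = -1 := by linear_combination h
  have h2 : ‖z * (starRingEnd ℂ) w‖ = 1 := by rw [h1]; simp
  have h3 : ‖z * (starRingEnd ℂ) w‖ < 1 := by
    rw [norm_mul, Complex.norm_conj]
    calc ‖z‖ * ‖w‖ ≤ ‖z‖ * 1 :=
          mul_le_mul_of_nonneg_left hw (norm_nonneg z)
      _ = ‖z‖ := mul_one _
      _ < 1 := hz
  exact absurd h2 h3.ne

lemma mob_abs_le {w z : ℂ} (hw : ‖w‖ ≤ 1) (hz : ‖z‖ < 1) :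
    ‖Mob w z‖ ≤ 1 := by
  rw [Mob, norm_div]
  apply div_le_one_of_le₀
  · have key : Complex.normSq (z + w) ≤ Complex.normSq (z * (starRingEnd ℂ) w + 1) := by
      have hz2 : z.re ^ 2 + z.im ^ 2 < 1 := by
        nlinarith [Complex.sq_norm z, Complex.normSq_apply z, norm_nonneg z, hz]
      have hw2 : w.re ^ 2 + w.im ^ 2 ≤ 1 := by
        nlinarith [Complex.sq_norm w, Complex.normSq_apply w, norm_nonneg w, hw]
      simp only [Complex.normSq_apply, Complex.add_re, Complex.add_im, Complex.mul_re,
        Complex.mul_im, Complex.conj_re, Complex.conj_im, Complex.one_re, Complex.one_im]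
      nlinarith [hz2, hw2]
    have := Real.sqrt_le_sqrt key
    simpa [Complex.norm_def] using this
  · exact norm_nonneg _

lemma mob_eq_self {w z : ℂ} (hw : ‖w‖ = 1) (hz : ‖z‖ < 1) :
    Mob w z = w := by
  rw [Mob, div_eq_iff (mob_denom_ne hw.le hz)]
  have hww : w * (starRingEnd ℂ) w = 1 := by
    rw [Complex.mul_conj]
    norm_cast
    rw [← Complex.sq_norm, hw]; norm_num
  linear_combination (-z) * hww

section key

variable {P : Type*} [MetricSpace P]

lemma integrand_contOn (Ω : Set ℂ) (hΩo : IsOpen Ω)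
    {g : ℝ → ℝ} (hgc : ContinuousOn g (Set.Icc 0 1)) (hg0 : g 0 = 0)
    (T : P → ℂ → ℂ)
    (hTc : ContinuousOn (fun q : P × ℂ => T q.1 q.2) (Set.univ ×ˢ Ω))
    (hTmap : ∀ q : P, ∀ z ∈ Ω, T q z ∈ ball (0:ℂ) 1)
    (p : P) {w' : ℂ} (hw' : ‖w'‖ ≤ 1) :
    ContinuousOn (fun z => vfun g (Mob w' (T p z))) Ω := by
  have hT1 : ContinuousOn (fun z => T p z) Ω := by
    intro z hz
    exact (hTc (p, z) ⟨mem_univ _, hz⟩).comp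
      ((continuous_const.prodMk continuous_id).continuousWithinAt)
      (fun y hy => ⟨mem_univ _, hy⟩)
  have hTlt : ∀ z ∈ Ω, ‖T p z‖ < 1 := fun z hz => by
    simpa using mem_ball_zero_iff.1 (hTmap p z hz)
  have hMob : ContinuousOn (fun z => Mob w' (T p z)) Ω := by
    intro z hz
    apply ContinuousWithinAt.div
    · exact (hT1 z hz).add continuousWithinAt_const
    · exact ((hT1 z hz).mul continuousWithinAt_const).add continuousWithinAt_const
    · exact mob_denom_ne hw' (hTlt z hz)
  exact (vfun_contOn hgc hg0).comp hMob
    (fun z hz => mem_closedBall_zero_iff.2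
      (by simpa using mob_abs_le hw' (hTlt z hz)))

lemma key_tendsto (Ω : Set ℂ) (hΩo : IsOpen Ω)
    (f : ℂ → ℝ) (hfi : IntegrableOn f Ω)
    {g : ℝ → ℝ} (hgc : ContinuousOn g (Set.Icc 0 1))
    (hgm : StrictMonoOn g (Set.Icc 0 1)) (hg0 : g 0 = 0)
    (T : P → ℂ → ℂ)
    (hTc : ContinuousOn (fun q : P × ℂ => T q.1 q.2) (Set.univ ×ˢ Ω))
    (hTmap : ∀ q : P, ∀ z ∈ Ω, T q z ∈ ball (0:ℂ) 1)
    (p : ℕ → P) (q : P) (hp : Tendsto p atTop (nhds q))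
    (W : ℕ → ℂ) (wlim : ℂ) (hWlt : ∀ n, ‖W n‖ < 1)
    (hWconv : Tendsto W atTop (nhds wlim)) (hwlim : ‖wlim‖ ≤ 1) :
    Tendsto (fun n => ∫ z in Ω, vfun g (Mob (W n) (T (p n) z)) * (f z : ℂ)) atTop
      (nhds (∫ z in Ω, vfun g (Mob wlim (T q z)) * (f z : ℂ))) := by
  have hTlt : ∀ (r : P), ∀ z ∈ Ω, ‖T r z‖ < 1 := fun r z hz => by
    simpa using mem_ball_zero_iff.1 (hTmap r z hz)
  have hfm : AEStronglyMeasurable (fun z => (f z : ℂ)) (volume.restrict Ω) :=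
    Complex.continuous_ofReal.comp_aestronglyMeasurable hfi.aestronglyMeasurable
  apply MeasureTheory.tendsto_integral_of_dominated_convergence
    (fun z => g 1 * ‖f z‖)
  · intro n
    exact ((integrand_contOn Ω hΩo hgc hg0 T hTc hTmap (p n)
      (hWlt n).le).aestronglyMeasurable hΩo.measurableSet).mul hfm
  · exact hfi.norm.const_mul (g 1)
  · intro n
    rw [ae_restrict_iff' hΩo.measurableSet]
    filter_upwards with z hz
    rw [norm_mul, Complex.norm_real]
    exact mul_le_mul_of_nonneg_right
      (vfun_norm_le hgm hg0 (mob_abs_le (hWlt n).le (hTlt (p n) z hz))) (norm_nonneg _)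
  · rw [ae_restrict_iff' hΩo.measurableSet]
    filter_upwards with z hz
    have hTz : Tendsto (fun n => T (p n) z) atTop (nhds (T q z)) := by
      have hc : ContinuousAt (fun r : P × ℂ => T r.1 r.2) (q, z) :=
        hTc.continuousAt ((isOpen_univ.prod hΩo).mem_nhds ⟨mem_univ _, hz⟩)
      exact hc.tendsto.comp (hp.prodMk_nhds tendsto_const_nhds)
    have hMobc : ContinuousAt (fun x : ℂ × ℂ => Mob x.1 x.2) (wlim, T q z) := by
      apply ContinuousAt.div
      · exact (continuous_snd.add continuous_fst).continuousAt
      · exact ((continuous_snd.mul (continuous_star.comp continuous_fst)).add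
          continuous_const).continuousAt
      · exact mob_denom_ne hwlim (hTlt q z hz)
    have hMobT : Tendsto (fun n => Mob (W n) (T (p n) z)) atTop
        (nhds (Mob wlim (T q z))) :=
      hMobc.tendsto.comp (hWconv.prodMk_nhds hTz)
    have hmem : Mob wlim (T q z) ∈ closedBall (0:ℂ) 1 :=
      mem_closedBall_zero_iff.2
        (by simpa using mob_abs_le hwlim (hTlt q z hz))
    have hvf : Tendsto (fun n => vfun g (Mob (W n) (T (p n) z))) atTop
        (nhds (vfun g (Mob wlim (T q z)))) := by
      apply ((vfun_contOn hgc hg0) _ hmem).tendsto.comp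
      rw [tendsto_nhdsWithin_iff]
      refine ⟨hMobT, Filter.Eventually.of_forall fun n => mem_closedBall_zero_iff.2 ?_⟩
      simpa using mob_abs_le (hWlt n).le (hTlt (p n) z hz)
    exact hvf.mul tendsto_const_nhds

end key

theorem stmt15 {P : Type*} [MetricSpace P]
    (Ω : Set ℂ) (hΩo : IsOpen Ω) (hΩb : Bornology.IsBounded Ω)
    (f : ℂ → ℝ) (hfi : IntegrableOn f Ω)
    (hf0 : ∀ z ∈ Ω, 0 ≤ f z) (hfpos : 0 < ∫ z in Ω, f z)
    (g : ℝ → ℝ) (hgc : ContinuousOn g (Set.Icc 0 1))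
    (hgm : StrictMonoOn g (Set.Icc 0 1)) (hg0 : g 0 = 0)
    (T : P → ℂ → ℂ)
    (hTc : ContinuousOn (fun q : P × ℂ => T q.1 q.2) (Set.univ ×ˢ Ω))
    (hTmap : ∀ q : P, ∀ z ∈ Ω, T q z ∈ ball (0:ℂ) 1)
    (w : P → ℂ)
    (hw : ∀ q : P, w q ∈ ball (0:ℂ) 1 ∧
      (∫ z in Ω, vfun g (Mob (w q) (T q z)) * (f z : ℂ)) = 0 ∧
      ∀ w' ∈ ball (0:ℂ) 1,
        (∫ z in Ω, vfun g (Mob w' (T q z)) * (f z : ℂ)) = 0 → w' = w q) :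
    Continuous w := by
  rw [continuous_iff_seqContinuous]
  intro x q hx
  apply tendsto_of_subseq_tendsto
  intro ns hns
  have hcb : ∀ n, w (x (ns n)) ∈ closedBall (0:ℂ) 1 :=
    fun n => ball_subset_closedBall (hw _).1
  obtain ⟨wlim, hwlimmem, φ, hφ, hconv⟩ :=
    (isCompact_closedBall (0:ℂ) 1).tendsto_subseq hcb
  refine ⟨φ, ?_⟩
  have hp : Tendsto (fun n => x (ns (φ n))) atTop (nhds q) :=
    hx.comp (hns.comp hφ.tendsto_atTop)
  have hwlim1 : ‖wlim‖ ≤ 1 := by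
    simpa using mem_closedBall_zero_iff.1 hwlimmem
  have hWlt : ∀ n, ‖w (x (ns (φ n)))‖ < 1 := fun n => by
    simpa using mem_ball_zero_iff.1 (hw (x (ns (φ n)))).1
  have hkey := key_tendsto Ω hΩo f hfi hgc hgm hg0 T hTc hTmap
    (fun n => x (ns (φ n))) q hp (fun n => w (x (ns (φ n)))) wlim hWlt hconv hwlim1
  have hzero : (∫ z in Ω, vfun g (Mob wlim (T q z)) * (f z : ℂ)) = 0 := by
    have hconst : (fun n => ∫ z in Ω,
        vfun g (Mob (w (x (ns (φ n)))) (T (x (ns (φ n))) z)) * (f z : ℂ)) = fun _ => 0 :=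
      funext fun n => (hw (x (ns (φ n)))).2.1
    rw [hconst] at hkey
    exact (tendsto_nhds_unique tendsto_const_nhds hkey).symm
  rcases lt_or_eq_of_le hwlim1 with hlt | heq
  · have hwq : wlim = w q := (hw q).2.2 wlim
      (mem_ball_zero_iff.2 (by simpa using hlt)) hzero
    rw [← hwq]
    exact hconv
  · exfalso
    have hwne : wlim ≠ 0 := by
      intro h; rw [h] at heq; simp at heq
    have hcongr : (∫ z in Ω, vfun g (Mob wlim (T q z)) * (f z : ℂ))
        = ∫ z in Ω, ((g 1 : ℂ) * wlim) * (f z : ℂ) := by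
      apply setIntegral_congr_fun hΩo.measurableSet
      intro z hz
      have hTlt : ‖T q z‖ < 1 := by
        simpa using mem_ball_zero_iff.1 (hTmap q z hz)
      show vfun g (Mob wlim (T q z)) * (f z : ℂ) = ((g 1 : ℂ) * wlim) * (f z : ℂ)
      rw [mob_eq_self heq hTlt]
      simp only [vfun, if_neg hwne, heq]
      norm_num
    rw [hcongr, MeasureTheory.integral_const_mul] at hzero
    have hir : (∫ z in Ω, (f z : ℂ)) = ((∫ z in Ω, f z : ℝ) : ℂ) := integral_ofReal
    rw [hir] at hzero
    have hg1 : 0 < g 1 := by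
      have := hgm (Set.mem_Icc.2 ⟨le_refl 0, zero_le_one⟩)
        (Set.mem_Icc.2 ⟨zero_le_one, le_refl 1⟩) zero_lt_one
      rwa [hg0] at this
    have := mul_eq_zero.1 hzero
    rcases this with h | h
    · rcases mul_eq_zero.1 h with h' | h'
      · exact hg1.ne' (by exact_mod_cast h')
      · exact hwne h'
    · rw [Complex.ofReal_eq_zero] at h
      exact hfpos.ne' h
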